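/- arXiv:1110.1560 — 7 statements merged into one kernel-verified Lean document; each statement's English description precedes it below -/
import Mathlib

section
/- Let R > √2 be a real number and h ≥ 1 an integer. For any two grid nodes U, V ∈ ℤ² with Euclidean distance d(U,V) ≤ (R−√2)·h, there exists a sequence of at most h+1 grid points U = W₀, W₁, …, W_k = V with k ≤ h such that consecutive points satisfy d(W_i, W_{i+1}) ≤ R. -/
/-- Euclidean distance between two grid points. -/
noncomputable def gridDist (U V : ℤ × ℤ) : ℝ :=
  Real.sqrt (((U.1 - V.1 : ℤ) : ℝ)^2 + ((U.2 - V.2 : ℤ) : ℝ)^2)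

noncomputable def ePt (U : ℤ × ℤ) : EuclideanSpace ℝ (Fin 2) := !₂[(U.1:ℝ), (U.2:ℝ)]

lemma gridDist_eq (U V : ℤ × ℤ) : gridDist U V = dist (ePt U) (ePt V) := by
  simp [gridDist, ePt, EuclideanSpace.dist_eq, Fin.sum_univ_two, Real.dist_eq, sq_abs]

noncomputable def roundPt (p : EuclideanSpace ℝ (Fin 2)) : ℤ × ℤ := (round (p 0), round (p 1))

lemma sqrt_half : Real.sqrt (1/2) = Real.sqrt 2 / 2 := by
  have h2 : (Real.sqrt 2 / 2)^2 = 1/2 := by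
    rw [div_pow, Real.sq_sqrt (by norm_num : (2:ℝ) ≥ 0)]; norm_num
  rw [← h2, Real.sqrt_sq (by positivity)]

lemma dist_roundPt (p : EuclideanSpace ℝ (Fin 2)) :
    dist (ePt (roundPt p)) p ≤ Real.sqrt 2 / 2 := by
  rw [← sqrt_half]
  rw [EuclideanSpace.dist_eq]
  apply Real.sqrt_le_sqrt
  have h0 : |(((round (p 0) : ℤ)):ℝ) - p 0| ≤ 1/2 := by
    simpa [abs_sub_comm] using abs_sub_round (p 0)
  have h1 : |(((round (p 1) : ℤ)):ℝ) - p 1| ≤ 1/2 := by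
    simpa [abs_sub_comm] using abs_sub_round (p 1)
  have e0 : ePt (roundPt p) 0 = ((round (p 0) : ℤ) : ℝ) := by simp [ePt, roundPt]
  have e1 : ePt (roundPt p) 1 = ((round (p 1) : ℤ) : ℝ) := by simp [ePt, roundPt]
  rw [Fin.sum_univ_two, e0, e1]
  have := sq_le_sq' (by linarith [abs_le.mp h0]) (abs_le.mp h0).2
  have := sq_le_sq' (by linarith [abs_le.mp h1]) (abs_le.mp h1).2
  simp [Real.dist_eq, sq_abs]
  nlinarith [abs_le.mp h0, abs_le.mp h1, sq_abs (((round (p 0) : ℤ) : ℝ) - p 0), sq_abs (((round (p 1) : ℤ) : ℝ) - p 1)]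

theorem at_most_h_hops (R : ℝ) (hR : R > Real.sqrt 2) (h : ℕ) (hh : 1 ≤ h)
    (U V : ℤ × ℤ) (hd : gridDist U V ≤ (R - Real.sqrt 2) * h) :
    ∃ k ≤ h, ∃ W : ℕ → ℤ × ℤ, W 0 = U ∧ W k = V ∧
      ∀ i < k, gridDist (W i) (W (i+1)) ≤ R := by
  have sqrt2_pos : (0:ℝ) < Real.sqrt 2 := by positivity
  have hR0 : (0:ℝ) < R := lt_trans sqrt2_pos hR
  induction h, hh using Nat.le_induction generalizing U V with
  | base =>
    refine ⟨1, le_refl _, fun i => if i = 0 then U else V, by simp, by simp, ?_⟩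
    intro i hi
    interval_cases i
    simp only [if_pos rfl, if_neg one_ne_zero]
    calc gridDist U V ≤ (R - Real.sqrt 2) * 1 := by simpa using hd
    _ ≤ R := by linarith
  | succ h hh IH =>
    by_cases hcase : gridDist U V ≤ (R - Real.sqrt 2) * h
    · obtain ⟨k, hk, W, hW0, hWk, hstep⟩ := IH U V hcase
      exact ⟨k, le_trans hk (Nat.le_succ h), W, hW0, hWk, hstep⟩
    · push_neg at hcase
      by_cases hdR : gridDist U V ≤ R
      · refine ⟨1, by omega, fun i => if i = 0 then U else V, by simp, by simp, ?_⟩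
        intro i hi
        interval_cases i
        simpa using hdR
      · push_neg at hdR
        set d := gridDist U V with hd_def
        set A := ePt U
        set B := ePt V
        have hdAB : d = dist A B := gridDist_eq U V
        have hd0 : (0:ℝ) < d := lt_trans hR0 hdR
        set t : ℝ := (R - Real.sqrt 2 / 2) / d with ht_def
        have ht0 : 0 ≤ t := by
          apply div_nonneg _ hd0.le
          linarith
        have ht1 : t ≤ 1 := by
          rw [div_le_one hd0]
          linarith
        set P : EuclideanSpace ℝ (Fin 2) := A + t • (B - A) with hP_def
        have hAP : dist A P = R - Real.sqrt 2 / 2 := by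
          rw [dist_eq_norm]
          have : A - P = (-t) • (B - A) := by rw [hP_def]; module
          rw [this, norm_smul, norm_neg, Real.norm_eq_abs, abs_of_nonneg ht0,
            ← dist_eq_norm, dist_comm, ← hdAB, ht_def]
          field_simp
        have hPB : dist P B = d - (R - Real.sqrt 2 / 2) := by
          rw [dist_eq_norm]
          have : P - B = (t - 1) • (B - A) := by rw [hP_def]; module
          rw [this, norm_smul, Real.norm_eq_abs, abs_of_nonpos (by linarith),
            ← dist_eq_norm, dist_comm, ← hdAB, ht_def]
          field_simp
          ring
        set W1 := roundPt P with hW1_def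
        have hround := dist_roundPt P
        have hUW1 : gridDist U W1 ≤ R := by
          rw [gridDist_eq]
          calc dist A (ePt W1) ≤ dist A P + dist P (ePt W1) := dist_triangle _ _ _
          _ = dist A P + dist (ePt W1) P := by rw [dist_comm P]
          _ ≤ (R - Real.sqrt 2 / 2) + Real.sqrt 2 / 2 := by rw [hAP]; linarith
          _ = R := by ring
        have hW1V : gridDist W1 V ≤ (R - Real.sqrt 2) * h := by
          rw [gridDist_eq]
          have hcast : (h:ℝ) + 1 = ((h+1 : ℕ) : ℝ) := by push_cast; ring
          have hd' : d ≤ (R - Real.sqrt 2) * (h + 1) := by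
            rw [hcast]; exact hd
          calc dist (ePt W1) B ≤ dist (ePt W1) P + dist P B := dist_triangle _ _ _
          _ ≤ Real.sqrt 2 / 2 + (d - (R - Real.sqrt 2 / 2)) := by rw [hPB]; linarith
          _ = d - R + Real.sqrt 2 := by ring
          _ ≤ (R - Real.sqrt 2) * h := by nlinarith
        obtain ⟨k, hk, W', hW'0, hW'k, hstep⟩ := IH W1 V hW1V
        refine ⟨k + 1, by omega, fun i => if i = 0 then U else W' (i - 1), by simp, by simp [hW'k], ?_⟩
        intro i hi
        match i with
        | 0 => simpa [hW'0] using hUW1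
        | (j+1) =>
          simp only [Nat.succ_ne_zero, if_neg, Nat.add_sub_cancel]
          simpa using hstep j (by omega)
end

section
/- Let R > √2, h ≥ 1 an integer, and let u₁, u₂ ∈ ℤ² be Gauss-reduced vectors (|u₁| ≤ |u₂| and 2|u₁·u₂| ≤ |u₁|²) with |u₁| > (R − √2)·h. Then for any integers α, β with |α| ≥ μ(R) or |β| ≥ μ(R), where μ(R) = 2√3·R/(3(R−√2)), the point W = α·u₁ + β·u₂ satisfies |W| > R·h. -/
/-- Euclidean norm of an integer vector. -/
noncomputable def inorm (u : ℤ × ℤ) : ℝ :=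
  Real.sqrt ((u.1 : ℝ)^2 + (u.2 : ℝ)^2)

/-- Standard dot product. -/
def idot (u v : ℤ × ℤ) : ℤ := u.1 * v.1 + u.2 * v.2

private lemma far_aux (R c H a d x y μ : ℝ) (hc : 0 < c) (hH : 1 ≤ H) (hR : 0 < R)
    (ha : 0 ≤ a) (hd : 2 * |d| ≤ a ^ 2) (hta : c * H < a)
    (hμ : 0 < μ) (hμ2 : 3 * μ ^ 2 * c ^ 2 = 4 * R ^ 2) (hm : μ ≤ |y|) :
    (R * H) ^ 2 < x ^ 2 * a ^ 2 + 2 * x * y * d + y ^ 2 * a ^ 2 := by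
  have hcH : 0 < c * H := mul_pos hc (lt_of_lt_of_le one_pos hH)
  have hta2 : (c * H) ^ 2 < a ^ 2 := by nlinarith
  have hxy : 2 * x * y * d ≥ -(|x| * |y| * a ^ 2) := by
    have h1 : x * y * d ≥ -|x * y * d| := neg_abs_le _
    have h2 : |x * y * d| = |x| * |y| * |d| := by rw [abs_mul, abs_mul]
    nlinarith [abs_nonneg x, abs_nonneg y, abs_nonneg d,
      mul_nonneg (abs_nonneg x) (abs_nonneg y)]
  have hm2 : μ ^ 2 ≤ y ^ 2 := by nlinarith [sq_abs y]
  have hkey : x ^ 2 * a ^ 2 + 2 * x * y * d + y ^ 2 * a ^ 2 ≥ (3/4) * y ^ 2 * a ^ 2 := by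
    nlinarith [mul_nonneg (sq_nonneg (|x| - |y| / 2)) (sq_nonneg a), sq_abs x, sq_abs y]
  have h5 : (3/4) * μ ^ 2 * a ^ 2 > (3/4) * μ ^ 2 * (c * H) ^ 2 := by
    nlinarith [mul_pos (pow_pos hμ 2) (sub_pos.mpr hta2)]
  have h6 : (3/4) * y ^ 2 * a ^ 2 ≥ (3/4) * μ ^ 2 * a ^ 2 := by
    nlinarith [mul_nonneg (by linarith : (0:ℝ) ≤ y ^ 2 - μ ^ 2) (sq_nonneg a)]
  have h7 : (3/4) * μ ^ 2 * (c * H) ^ 2 = (R * H) ^ 2 := by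
    linear_combination (H ^ 2 / 4) * hμ2
  linarith

theorem far_lattice_points (R : ℝ) (hR : R > Real.sqrt 2) (h : ℕ) (hh : 1 ≤ h)
    (u₁ u₂ : ℤ × ℤ)
    (hred₁ : inorm u₁ ≤ inorm u₂)
    (hred₂ : 2 * |(idot u₁ u₂ : ℝ)| ≤ (inorm u₁)^2)
    (hu₁ : inorm u₁ > (R - Real.sqrt 2) * h)
    (α β : ℤ)
    (hαβ : |(α : ℝ)| ≥ 2 * Real.sqrt 3 * R / (3 * (R - Real.sqrt 2)) ∨
           |(β : ℝ)| ≥ 2 * Real.sqrt 3 * R / (3 * (R - Real.sqrt 2))) :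
    inorm (α • u₁ + β • u₂) > R * h := by
  have hs2 : (0:ℝ) < Real.sqrt 2 := Real.sqrt_pos.mpr two_pos
  have hc : 0 < R - Real.sqrt 2 := sub_pos.mpr hR
  have hR0 : (0:ℝ) < R := lt_trans hs2 hR
  have hh' : (1:ℝ) ≤ (h : ℝ) := by exact_mod_cast hh
  set μ := 2 * Real.sqrt 3 * R / (3 * (R - Real.sqrt 2)) with hμdef
  have hs3 : Real.sqrt 3 ^ 2 = 3 := Real.sq_sqrt (by norm_num)
  have hs3p : 0 < Real.sqrt 3 := Real.sqrt_pos.mpr (by norm_num)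
  have hμpos : 0 < μ := div_pos (by positivity) (by linarith)
  have hμ2 : 3 * μ ^ 2 * (R - Real.sqrt 2) ^ 2 = 4 * R ^ 2 := by
    have h1 : μ * (3 * (R - Real.sqrt 2)) = 2 * Real.sqrt 3 * R := by
      rw [hμdef]; field_simp
    linear_combination ((μ * (3 * (R - Real.sqrt 2)) + 2 * Real.sqrt 3 * R) / 3) * h1 +
      (4 * R ^ 2 / 3) * hs3
  have ha0 : 0 ≤ inorm u₁ := Real.sqrt_nonneg _
  have ha2 : (inorm u₁) ^ 2 = (u₁.1 : ℝ) ^ 2 + (u₁.2 : ℝ) ^ 2 :=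
    Real.sq_sqrt (by positivity)
  have hb2 : (inorm u₂) ^ 2 = (u₂.1 : ℝ) ^ 2 + (u₂.2 : ℝ) ^ 2 :=
    Real.sq_sqrt (by positivity)
  have hab : (inorm u₁) ^ 2 ≤ (inorm u₂) ^ 2 := pow_le_pow_left₀ ha0 hred₁ 2
  have hc1 : (α • u₁ + β • u₂).1 = α * u₁.1 + β * u₂.1 := rfl
  have hc2 : (α • u₁ + β • u₂).2 = α * u₁.2 + β * u₂.2 := rfl
  rw [gt_iff_lt, inorm, hc1, hc2]
  rw [show ((R : ℝ) * h < Real.sqrt (((α * u₁.1 + β * u₂.1 : ℤ) : ℝ) ^ 2 +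
      ((α * u₁.2 + β * u₂.2 : ℤ) : ℝ) ^ 2)) ↔ _ from
    Real.lt_sqrt (mul_nonneg hR0.le (Nat.cast_nonneg h))]
  have hSa : ((α * u₁.1 + β * u₂.1 : ℤ) : ℝ) ^ 2 + ((α * u₁.2 + β * u₂.2 : ℤ) : ℝ) ^ 2 =
      (α : ℝ) ^ 2 * (inorm u₁) ^ 2 + 2 * (α : ℝ) * (β : ℝ) * ((idot u₁ u₂ : ℤ) : ℝ) +
      (β : ℝ) ^ 2 * (inorm u₂) ^ 2 := by
    rw [ha2, hb2]; push_cast [idot]; ring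
  rw [hSa]
  have hbb : (β : ℝ) ^ 2 * (inorm u₂) ^ 2 ≥ (β : ℝ) ^ 2 * (inorm u₁) ^ 2 :=
    mul_le_mul_of_nonneg_left hab (sq_nonneg _)
  rcases hαβ with hm | hm
  · have := far_aux R (R - Real.sqrt 2) (h : ℝ) (inorm u₁) ((idot u₁ u₂ : ℤ) : ℝ)
      (β : ℝ) (α : ℝ) μ hc hh' hR0 ha0 hred₂ hu₁ hμpos hμ2 hm
    have e : (β : ℝ) ^ 2 * (inorm u₁) ^ 2 + 2 * (β : ℝ) * (α : ℝ) * ((idot u₁ u₂ : ℤ) : ℝ) +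
        (α : ℝ) ^ 2 * (inorm u₁) ^ 2 =
        (α : ℝ) ^ 2 * (inorm u₁) ^ 2 + 2 * (α : ℝ) * (β : ℝ) * ((idot u₁ u₂ : ℤ) : ℝ) +
        (β : ℝ) ^ 2 * (inorm u₁) ^ 2 := by ring
    linarith [this, hbb]
  · have := far_aux R (R - Real.sqrt 2) (h : ℝ) (inorm u₁) ((idot u₁ u₂ : ℤ) : ℝ)
      (α : ℝ) (β : ℝ) μ hc hh' hR0 ha0 hred₂ hu₁ hμpos hμ2 hm
    linarith [this, hbb]
end

section
/- Let u₁ = (x₁,y₁), u₂ = (x₂,y₂) ∈ ℤ² with d = x₁y₂ − x₂y₁ ≠ 0. Define c₁(w) = (x·y₂ − y·x₂) mod |d| and c₂(w) = (−x·y₁ + y·x₁) mod |d| for w = (x,y) ∈ ℤ². Then for any w₁, w₂ ∈ ℤ², c₁(w₁) = c₁(w₂) and c₂(w₁) = c₂(w₂) if and only if w₁ − w₂ = α·u₁ + β·u₂ for some integers α, β. -/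
theorem vcm_color_eq_iff_lattice (u₁ u₂ : ℤ × ℤ)
    (d : ℤ) (hd : d = u₁.1 * u₂.2 - u₁.2 * u₂.1) (hd0 : d ≠ 0)
    (c₁ c₂ : ℤ × ℤ → ℤ)
    (hc₁ : ∀ w : ℤ × ℤ, c₁ w = (w.1 * u₂.2 - w.2 * u₂.1) % |d|)
    (hc₂ : ∀ w : ℤ × ℤ, c₂ w = (-(w.1 * u₁.2) + w.2 * u₁.1) % |d|)
    (w₁ w₂ : ℤ × ℤ) :
    (c₁ w₁ = c₁ w₂ ∧ c₂ w₁ = c₂ w₂) ↔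
      ∃ α β : ℤ, w₁ - w₂ = α • u₁ + β • u₂ := by
  constructor
  · rintro ⟨h1, h2⟩
    rw [hc₁ w₁, hc₁ w₂] at h1
    rw [hc₂ w₁, hc₂ w₂] at h2
    have hA : d ∣ (w₁.1 * u₂.2 - w₁.2 * u₂.1) - (w₂.1 * u₂.2 - w₂.2 * u₂.1) :=
      (abs_dvd _ _).mp (Int.ModEq.dvd (Int.ModEq.symm h1))
    have hB : d ∣ (-(w₁.1 * u₁.2) + w₁.2 * u₁.1) - (-(w₂.1 * u₁.2) + w₂.2 * u₁.1) :=
      (abs_dvd _ _).mp (Int.ModEq.dvd (Int.ModEq.symm h2))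
    obtain ⟨α, hα⟩ := hA
    obtain ⟨β, hβ⟩ := hB
    refine ⟨α, β, ?_⟩
    have e1 : w₁.1 - w₂.1 = α * u₁.1 + β * u₂.1 := by
      apply mul_left_cancel₀ hd0
      linear_combination u₁.1 * hα + u₂.1 * hβ + (w₁.1 - w₂.1) * hd
    have e2 : w₁.2 - w₂.2 = α * u₁.2 + β * u₂.2 := by
      apply mul_left_cancel₀ hd0
      linear_combination u₁.2 * hα + u₂.2 * hβ + (w₁.2 - w₂.2) * hd
    apply Prod.ext <;> simp [Prod.smul_def, e1, e2]
  · rintro ⟨α, β, h⟩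
    have e1 : w₁.1 - w₂.1 = α * u₁.1 + β * u₂.1 := by
      have := congrArg Prod.fst h; simpa using this
    have e2 : w₁.2 - w₂.2 = α * u₁.2 + β * u₂.2 := by
      have := congrArg Prod.snd h; simpa using this
    constructor
    · rw [hc₁ w₁, hc₁ w₂]
      refine Int.ModEq.symm (Int.modEq_iff_dvd.mpr ?_)
      rw [abs_dvd]
      exact ⟨α, by linear_combination u₂.2 * e1 - u₂.1 * e2 - α * hd⟩
    · rw [hc₂ w₁, hc₂ w₂]
      refine Int.ModEq.symm (Int.modEq_iff_dvd.mpr ?_)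
      rw [abs_dvd]
      exact ⟨β, by linear_combination -u₁.2 * e1 + u₁.1 * e2 - β * hd⟩
end

section
/- Let u₁, u₂ ∈ ℤ² with d = det(u₁,u₂) ≠ 0, and define c₁, c₂ as in the VCM coloring: c₁(w) = det(w,u₂) mod |d|, c₂(w) = det(u₁,w) mod |d|. Then the set {(c₁(w), c₂(w)) : w ∈ ℤ²} has cardinality exactly |d|. -/
lemma index_range_eq_natAbs_det
    {f : (Fin 2 → ℤ) →ₗ[ℤ] (Fin 2 → ℤ)} (hf : Function.Injective f) :
    (LinearMap.range f).toAddSubgroup.index = (LinearMap.det f).natAbs := by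
  classical
  set N := LinearMap.range f with hN
  obtain ⟨m, snf⟩ := N.smithNormalForm (Pi.basisFun ℤ (Fin 2))
  let e₀ : (Fin 2 → ℤ) ≃ₗ[ℤ] N := LinearEquiv.ofInjective f hf
  have hm : m = 2 := by
    have e1 : Fin m ≃ Fin 2 :=
      Module.Basis.indexEquiv snf.bN ((Pi.basisFun ℤ (Fin 2)).map e₀)
    simpa using Fintype.card_congr e1
  subst hm
  have hidx : N.toAddSubgroup.index = ∏ i : Fin 2, (snf.a i).natAbs := by
    rw [snf.toAddSubgroup_index_eq_ite]
    simp [Int.index_zmultiples]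
  have hfe : f = N.subtype ∘ₗ (e₀ : (Fin 2 → ℤ) →ₗ[ℤ] N) := by
    ext v i
    rfl
  have hassoc : Associated (LinearMap.det f)
      (LinearMap.det (N.subtype ∘ₗ
        (snf.bM.equiv snf.bN (Equiv.refl (Fin 2)) : (Fin 2 → ℤ) →ₗ[ℤ] N))) := by
    conv_lhs => rw [hfe]
    exact LinearMap.associated_det_comp_equiv N.subtype e₀ _
  have hdet2 : LinearMap.det (N.subtype ∘ₗ
      (snf.bM.equiv snf.bN (Equiv.refl (Fin 2)) : (Fin 2 → ℤ) →ₗ[ℤ] N))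
      = snf.bM.det ((↑) ∘ snf.bN) := (Module.Basis.det_comp_basis snf.bN snf.bM N.subtype).symm
  let σ : Equiv.Perm (Fin 2) :=
    Equiv.ofBijective snf.f ((Finite.injective_iff_bijective).mp snf.f.injective)
  have hcoe : ((↑) ∘ snf.bN : Fin 2 → (Fin 2 → ℤ)) = fun i => snf.a i • snf.bM (σ i) := by
    funext i
    simp [σ, snf.snf i, Equiv.ofBijective_apply]
  have e1 : snf.bM.det (fun i => snf.a i • snf.bM (σ i))
      = (∏ i : Fin 2, snf.a i) • snf.bM.det (fun i => snf.bM (σ i)) :=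
    snf.bM.det.toMultilinearMap.map_smul_univ _ _
  have e2 : snf.bM.det (fun i => snf.bM (σ i)) = Equiv.Perm.sign σ • (1:ℤ) := by
    have := snf.bM.det.map_perm (⇑snf.bM) σ
    simpa [Module.Basis.det_self, Function.comp_def] using this
  have hdet3 : snf.bM.det ((↑) ∘ snf.bN) = (∏ i : Fin 2, snf.a i) • (Equiv.Perm.sign σ • (1:ℤ)) := by
    rw [hcoe]; rw [e1, e2]
  have habs : (LinearMap.det f).natAbs = ∏ i : Fin 2, (snf.a i).natAbs := by
    have h1 : (LinearMap.det f).natAbs = (snf.bM.det ((↑) ∘ snf.bN)).natAbs := by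
      rw [Int.natAbs_eq_iff_associated.mpr hassoc, hdet2]
    rw [h1, hdet3]
    rcases Int.units_eq_one_or (Equiv.Perm.sign σ) with h | h <;>
      simp [h, Fin.prod_univ_two, Int.natAbs_mul, smul_eq_mul]
  rw [hidx, habs]

theorem vcm_color_set_card (u₁ u₂ : ℤ × ℤ)
    (d : ℤ) (hd : d = u₁.1 * u₂.2 - u₁.2 * u₂.1) (hd0 : d ≠ 0) :
    Set.ncard {p : ℤ × ℤ | ∃ w : ℤ × ℤ,
      p = ((w.1 * u₂.2 - w.2 * u₂.1) % |d|, (u₁.1 * w.2 - u₁.2 * w.1) % |d|)} =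
      d.natAbs := by
  classical
  -- the linear map with columns u₁, u₂
  set A : Matrix (Fin 2) (Fin 2) ℤ := !![u₁.1, u₂.1; u₁.2, u₂.2] with hA
  set f : (Fin 2 → ℤ) →ₗ[ℤ] (Fin 2 → ℤ) := Matrix.toLin' A with hfdef
  have hfapp : ∀ (c : Fin 2 → ℤ),
      f c = ![c 0 * u₁.1 + c 1 * u₂.1, c 0 * u₁.2 + c 1 * u₂.2] := by
    intro c
    funext i
    fin_cases i <;>
      simp [hfdef, hA, Matrix.toLin'_apply, Matrix.mulVec, dotProduct,
        Fin.sum_univ_two, mul_comm]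
  have hdet : LinearMap.det f = d := by
    rw [hfdef, LinearMap.det_toLin', hA, Matrix.det_fin_two_of, hd]
    ring
  have hinj : Function.Injective f := by
    rw [← LinearMap.ker_eq_bot, LinearMap.ker_eq_bot']
    intro c hc
    have hc' := (hfapp c).symm.trans hc
    have h0 : c 0 * u₁.1 + c 1 * u₂.1 = 0 := by simpa using congrFun hc' 0
    have h1 : c 0 * u₁.2 + c 1 * u₂.2 = 0 := by simpa using congrFun hc' 1
    funext i
    fin_cases i
    · have : d * c 0 = 0 := by linear_combination u₂.2 * h0 - u₂.1 * h1 + c 0 * hd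
      simpa using mul_eq_zero.mp this |>.resolve_left hd0
    · have : d * c 1 = 0 := by linear_combination u₁.1 * h1 - u₁.2 * h0 + c 1 * hd
      simpa using mul_eq_zero.mp this |>.resolve_left hd0
  set H : AddSubgroup (Fin 2 → ℤ) := (LinearMap.range f).toAddSubgroup with hH
  -- the coloring map
  set Ψ : (Fin 2 → ℤ) → ℤ × ℤ := fun v =>
    ((v 0 * u₂.2 - v 1 * u₂.1) % |d|, (u₁.1 * v 1 - u₁.2 * v 0) % |d|) with hΨ
  -- membership in H
  have hmemH : ∀ v : Fin 2 → ℤ, v ∈ H ↔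
      ∃ s t : ℤ, v 0 = s * u₁.1 + t * u₂.1 ∧ v 1 = s * u₁.2 + t * u₂.2 := by
    intro v
    constructor
    · rintro ⟨c, rfl⟩
      exact ⟨c 0, c 1, by rw [hfapp c]; simp, by rw [hfapp c]; simp⟩
    · rintro ⟨s, t, h0, h1⟩
      refine ⟨![s, t], ?_⟩
      funext i
      rw [hfapp]
      fin_cases i <;> simp [h0, h1]
  -- Ψ is constant on H-cosets
  have hwd : ∀ v w : Fin 2 → ℤ, -v + w ∈ H → Ψ v = Ψ w := by
    intro v w hvw
    obtain ⟨s, t, h0, h1⟩ := (hmemH _).mp hvw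
    refine Prod.ext ?_ ?_
    · show (v 0 * u₂.2 - v 1 * u₂.1) % |d| = (w 0 * u₂.2 - w 1 * u₂.1) % |d|
      have : |d| ∣ (w 0 * u₂.2 - w 1 * u₂.1) - (v 0 * u₂.2 - v 1 * u₂.1) := by
        rw [abs_dvd]
        refine ⟨s, ?_⟩
        have e0 : w 0 - v 0 = s * u₁.1 + t * u₂.1 := by
          simpa [sub_eq_neg_add] using h0
        have e1 : w 1 - v 1 = s * u₁.2 + t * u₂.2 := by
          simpa [sub_eq_neg_add] using h1
        linear_combination u₂.2 * e0 - u₂.1 * e1 - s * hd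
      exact Int.modEq_iff_dvd.mpr this
    · show (u₁.1 * v 1 - u₁.2 * v 0) % |d| = (u₁.1 * w 1 - u₁.2 * w 0) % |d|
      have : |d| ∣ (u₁.1 * w 1 - u₁.2 * w 0) - (u₁.1 * v 1 - u₁.2 * v 0) := by
        rw [abs_dvd]
        refine ⟨t, ?_⟩
        have e0 : w 0 - v 0 = s * u₁.1 + t * u₂.1 := by
          simpa [sub_eq_neg_add] using h0
        have e1 : w 1 - v 1 = s * u₁.2 + t * u₂.2 := by
          simpa [sub_eq_neg_add] using h1
        linear_combination u₁.1 * e1 - u₁.2 * e0 - t * hd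
      exact Int.modEq_iff_dvd.mpr this
  -- and conversely
  have hconv : ∀ v w : Fin 2 → ℤ, Ψ v = Ψ w → -v + w ∈ H := by
    intro v w h
    have h1 : (v 0 * u₂.2 - v 1 * u₂.1) % |d| = (w 0 * u₂.2 - w 1 * u₂.1) % |d| :=
      congrArg Prod.fst h
    have h2 : (u₁.1 * v 1 - u₁.2 * v 0) % |d| = (u₁.1 * w 1 - u₁.2 * w 0) % |d| :=
      congrArg Prod.snd h
    obtain ⟨s, hs⟩ : d ∣ (w 0 * u₂.2 - w 1 * u₂.1) - (v 0 * u₂.2 - v 1 * u₂.1) :=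
      (abs_dvd _ _).mp (Int.ModEq.dvd h1)
    obtain ⟨t, ht⟩ : d ∣ (u₁.1 * w 1 - u₁.2 * w 0) - (u₁.1 * v 1 - u₁.2 * v 0) :=
      (abs_dvd _ _).mp (Int.ModEq.dvd h2)
    rw [hmemH]
    refine ⟨s, t, ?_, ?_⟩
    · show -(v 0) + w 0 = s * u₁.1 + t * u₂.1
      apply mul_left_cancel₀ hd0
      linear_combination u₁.1 * hs + u₂.1 * ht + (w 0 - v 0) * hd
    · show -(v 1) + w 1 = s * u₁.2 + t * u₂.2
      apply mul_left_cancel₀ hd0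
      linear_combination u₁.2 * hs + u₂.2 * ht + (w 1 - v 1) * hd
  -- quotient and lift
  have hset : {p : ℤ × ℤ | ∃ w : ℤ × ℤ,
      p = ((w.1 * u₂.2 - w.2 * u₂.1) % |d|, (u₁.1 * w.2 - u₁.2 * w.1) % |d|)}
      = Set.range Ψ := by
    ext p
    simp only [Set.mem_setOf_eq, Set.mem_range]
    constructor
    · rintro ⟨w, rfl⟩
      exact ⟨![w.1, w.2], by simp [hΨ]⟩
    · rintro ⟨v, rfl⟩
      exact ⟨(v 0, v 1), rfl⟩
  let G : ((Fin 2 → ℤ) ⧸ H) → ℤ × ℤ := fun q =>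
    Quotient.liftOn' q Ψ (fun v w h => hwd v w (QuotientAddGroup.leftRel_apply.mp h))
  have hGmk : ∀ v : Fin 2 → ℤ, G (QuotientAddGroup.mk v) = Ψ v := fun _ => rfl
  have hGinj : Function.Injective G := by
    intro q1 q2
    refine Quotient.inductionOn₂' q1 q2 ?_
    intro v w hvw
    exact Quotient.sound' (QuotientAddGroup.leftRel_apply.mpr (hconv v w hvw))
  have hrange : Set.range Ψ = Set.range G := by
    ext p
    constructor
    · rintro ⟨v, rfl⟩
      exact ⟨QuotientAddGroup.mk v, rfl⟩
    · rintro ⟨q, rfl⟩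
      induction q using QuotientAddGroup.induction_on with
      | H v => exact ⟨v, rfl⟩
  calc ({p : ℤ × ℤ | ∃ w : ℤ × ℤ,
      p = ((w.1 * u₂.2 - w.2 * u₂.1) % |d|, (u₁.1 * w.2 - u₁.2 * w.1) % |d|)}).ncard
      = (Set.range Ψ).ncard := by rw [hset]
    _ = Nat.card (Set.range Ψ) := (Nat.card_coe_set_eq _).symm
    _ = Nat.card (Set.range G) := by rw [hrange]
    _ = Nat.card ((Fin 2 → ℤ) ⧸ H) := (Nat.card_congr (Equiv.ofInjective G hGinj)).symm
    _ = H.index := rfl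
    _ = d.natAbs := by rw [hH, index_range_eq_natAbs_det hinj, hdet]
end

section
/- Let R > √2 and h ≥ 1. Any valid h-hop coloring φ of ℤ² (with radio range R) has the property that any two distinct nodes of the same color are at Euclidean distance strictly greater than (R − √2)·h. -/
/-- `U` is at most `h` hops from `V` for radio range `R`. -/
def AtMostHops (R : ℝ) (h : ℕ) (U V : ℤ × ℤ) : Prop :=
  ∃ k ≤ h, ∃ W : ℕ → ℤ × ℤ, W 0 = U ∧ W k = V ∧
    ∀ i < k, 0 < gridDist (W i) (W (i+1)) ∧ gridDist (W i) (W (i+1)) ≤ R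

noncomputable def toC (U : ℤ × ℤ) : ℂ := ⟨(U.1 : ℝ), (U.2 : ℝ)⟩

lemma gridDist_eq_dist (U V : ℤ × ℤ) : gridDist U V = dist (toC U) (toC V) := by
  rw [gridDist, Complex.dist_eq, Complex.norm_def, Complex.normSq_apply]
  simp only [toC, Complex.sub_re, Complex.sub_im]
  push_cast
  ring_nf

lemma toC_injective : Function.Injective toC := by
  intro U V h
  have h1 : (U.1 : ℝ) = (V.1 : ℝ) := congrArg Complex.re h
  have h2 : (U.2 : ℝ) = (V.2 : ℝ) := congrArg Complex.im h
  exact Prod.ext (by exact_mod_cast h1) (by exact_mod_cast h2)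

lemma gridDist_pos {U V : ℤ × ℤ} (h : U ≠ V) : 0 < gridDist U V := by
  rw [gridDist_eq_dist]
  exact dist_pos.mpr (fun hc => h (toC_injective hc))

lemma round_close (z : ℂ) :
    dist (toC (round z.re, round z.im)) z ≤ Real.sqrt 2 / 2 := by
  have h1 : |((round z.re : ℤ) : ℝ) - z.re| ≤ 1/2 := by
    rw [abs_sub_comm]; exact abs_sub_round z.re
  have h2 : |((round z.im : ℤ) : ℝ) - z.im| ≤ 1/2 := by
    rw [abs_sub_comm]; exact abs_sub_round z.im
  rw [Complex.dist_eq, Complex.norm_def, Complex.normSq_apply]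
  have key : (toC (round z.re, round z.im) - z).re * (toC (round z.re, round z.im) - z).re +
      (toC (round z.re, round z.im) - z).im * (toC (round z.re, round z.im) - z).im ≤ 1/2 := by
    simp only [toC, Complex.sub_re, Complex.sub_im]
    nlinarith [abs_nonneg (((round z.re : ℤ) : ℝ) - z.re), abs_nonneg (((round z.im : ℤ) : ℝ) - z.im),
      sq_abs (((round z.re : ℤ) : ℝ) - z.re), sq_abs (((round z.im : ℤ) : ℝ) - z.im)]
  calc Real.sqrt _ ≤ Real.sqrt (1/2) := Real.sqrt_le_sqrt key
    _ = Real.sqrt 2 / 2 := by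
        have h2' : Real.sqrt 2 ^ 2 = 2 := Real.sq_sqrt (by norm_num)
        have h : ((Real.sqrt 2)/2)^2 = 1/2 := by rw [div_pow, h2']; norm_num
        rw [← h, Real.sqrt_sq (by positivity)]

lemma hops_of_close (R : ℝ) (hR : R > Real.sqrt 2) :
    ∀ k : ℕ, ∀ U V : ℤ × ℤ, U ≠ V → gridDist U V ≤ (R - Real.sqrt 2) * k →
      AtMostHops R k U V := by
  have hs2 : (0:ℝ) < Real.sqrt 2 := Real.sqrt_pos.mpr (by norm_num)
  intro k
  induction k with
  | zero =>
    intro U V hne hd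
    exact absurd hd (by simpa using not_le.mpr (gridDist_pos hne))
  | succ k ih =>
    intro U V hne hd
    by_cases hcase : gridDist U V ≤ R
    · exact ⟨1, by omega, fun n => if n = 0 then U else V, by simp, by simp,
        fun i hi => by
          interval_cases i
          simpa using ⟨gridDist_pos hne, hcase⟩⟩
    · push_neg at hcase
      set d := gridDist U V with hdd
      have hd0 : 0 < d := gridDist_pos hne
      set t : ℝ := (R - Real.sqrt 2 / 2) / d with htdef
      have hRd : R < d := hcase
      have htd : t * d = R - Real.sqrt 2 / 2 := div_mul_cancel₀ _ (ne_of_gt hd0)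
      have ht0 : 0 ≤ t := by
        apply div_nonneg _ hd0.le
        nlinarith
      have ht1 : t ≤ 1 := by
        rw [htdef, div_le_one hd0]
        nlinarith
      set u := toC U with hu
      set v := toC V with hv
      have hduv : dist u v = d := (gridDist_eq_dist U V).symm
      set P : ℂ := u + (t : ℂ) * (v - u) with hP
      have hdist_uP : dist u P = t * d := by
        rw [hP, dist_eq_norm]
        have : u - (u + (t : ℂ) * (v - u)) = -((t:ℂ) * (v - u)) := by ring
        rw [this, norm_neg, norm_mul, Complex.norm_real, Real.norm_eq_abs, abs_of_nonneg ht0,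
          show ‖v - u‖ = d by rw [← dist_eq_norm, dist_comm]; exact hduv]
      have hdist_Pv : dist P v = (1 - t) * d := by
        rw [hP, dist_eq_norm]
        have : u + (t : ℂ) * (v - u) - v = -(((1 - t : ℝ) : ℂ) * (v - u)) := by
          push_cast; ring
        rw [this, norm_neg, norm_mul, Complex.norm_real, Real.norm_eq_abs,
          abs_of_nonneg (by linarith),
          show ‖v - u‖ = d by rw [← dist_eq_norm, dist_comm]; exact hduv]
      set W : ℤ × ℤ := (round P.re, round P.im) with hW
      have herr : dist (toC W) P ≤ Real.sqrt 2 / 2 := round_close P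
      have hUW : gridDist U W ≤ R := by
        rw [gridDist_eq_dist]
        calc dist u (toC W) ≤ dist u P + dist P (toC W) := dist_triangle _ _ _
          _ ≤ t * d + Real.sqrt 2 / 2 := by
              rw [dist_comm P (toC W)]; linarith [herr]
          _ = R := by rw [htd]; ring
      have hUWpos : 0 < gridDist U W := by
        rw [gridDist_eq_dist]
        have h1 : dist u P ≤ dist u (toC W) + dist (toC W) P := dist_triangle _ _ _
        rw [hdist_uP, htd] at h1
        linarith
      have hWV : gridDist W V ≤ (R - Real.sqrt 2) * k := by
        rw [gridDist_eq_dist]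
        calc dist (toC W) v ≤ dist (toC W) P + dist P v := dist_triangle _ _ _
          _ ≤ Real.sqrt 2 / 2 + (1 - t) * d := by rw [hdist_Pv]; linarith
          _ = d - R + Real.sqrt 2 := by nlinarith [htd]
          _ ≤ (R - Real.sqrt 2) * k := by push_cast at hd ⊢; nlinarith
      have hWneV : W ≠ V := by
        intro hEq
        rw [hEq, ← hv] at herr
        have h1 : dist P v ≤ Real.sqrt 2 / 2 := by rw [dist_comm]; exact herr
        rw [hdist_Pv] at h1
        nlinarith [htd]
      obtain ⟨j, hj, Wf, hW0, hWk, hWhop⟩ := ih W V hWneV hWV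
      refine ⟨j + 1, by omega, fun n => match n with | 0 => U | Nat.succ m => Wf m, rfl, hWk, ?_⟩
      intro i hi
      match i with
      | 0 =>
        simp only []
        rw [hW0]
        exact ⟨hUWpos, hUW⟩
      | Nat.succ m =>
        exact hWhop m (by omega)

theorem same_color_far {C : Type*} (R : ℝ) (hR : R > Real.sqrt 2)
    (h : ℕ) (hh : 1 ≤ h) (φ : ℤ × ℤ → C)
    (hvalid : ∀ U V : ℤ × ℤ, U ≠ V → AtMostHops R h U V → φ U ≠ φ V) :
    ∀ U V : ℤ × ℤ, U ≠ V → φ U = φ V → gridDist U V > (R - Real.sqrt 2) * h := by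
  intro U V hne hcol
  by_contra hle
  push_neg at hle
  exact hvalid U V hne (hops_of_close R hR h U V hne hle) hcol
end

section
/- For any real R > 0 and integer h ≥ 1, let λ = ⌊hR⌋ + 1 and let u₁ = (λ, 0), u₂ = (0, λ). Then the coloring of ℤ² in which two nodes share a color exactly when their difference lies in the lattice generated by u₁ and u₂ is a valid h-hop coloring, using λ² colors. -/
private lemma gridDist_eq_cabs (U V : ℤ × ℤ) :
    gridDist U V = ‖(⟨(U.1 : ℝ), (U.2 : ℝ)⟩ - ⟨(V.1 : ℝ), (V.2 : ℝ)⟩ : ℂ)‖ := by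
  rw [Complex.norm_def, gridDist]
  congr 1
  simp [Complex.normSq_apply, Complex.sub_re, Complex.sub_im]
  ring

private lemma gridDist_triangle (U V W : ℤ × ℤ) :
    gridDist U W ≤ gridDist U V + gridDist V W := by
  rw [gridDist_eq_cabs, gridDist_eq_cabs, gridDist_eq_cabs]
  exact norm_sub_le_norm_sub_add_norm_sub _ _ _

private lemma gridDist_self (U : ℤ × ℤ) : gridDist U U = 0 := by
  simp [gridDist]

private lemma abs_fst_le_gridDist (U V : ℤ × ℤ) :
    |((U.1 - V.1 : ℤ) : ℝ)| ≤ gridDist U V := by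
  rw [gridDist, ← Real.sqrt_sq_eq_abs]
  apply Real.sqrt_le_sqrt
  nlinarith [sq_nonneg ((U.2 - V.2 : ℤ) : ℝ)]

private lemma abs_snd_le_gridDist (U V : ℤ × ℤ) :
    |((U.2 - V.2 : ℤ) : ℝ)| ≤ gridDist U V := by
  rw [gridDist, ← Real.sqrt_sq_eq_abs]
  apply Real.sqrt_le_sqrt
  nlinarith [sq_nonneg ((U.1 - V.1 : ℤ) : ℝ)]

private lemma path_bound (R : ℝ) (W : ℕ → ℤ × ℤ) :
    ∀ k : ℕ, (∀ i < k, gridDist (W i) (W (i+1)) ≤ R) →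
      gridDist (W 0) (W k) ≤ k * R := by
  intro k
  induction k with
  | zero => intro _; simp [gridDist_self]
  | succ n ih =>
    intro hW
    have h1 : gridDist (W 0) (W (n+1)) ≤ gridDist (W 0) (W n) + gridDist (W n) (W (n+1)) :=
      gridDist_triangle _ _ _
    have h2 := ih (fun i hi => hW i (Nat.lt_succ_of_lt hi))
    have h3 := hW n (Nat.lt_succ_self n)
    push_cast
    linarith

theorem square_lattice_coloring (R : ℝ) (hR : 0 < R) (h : ℕ) (hh : 1 ≤ h)
    (lam : ℤ) (hlam : lam = ⌊(h : ℝ) * R⌋ + 1)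
    (φ : ℤ × ℤ → ℤ × ℤ) (hφ : ∀ w : ℤ × ℤ, φ w = (w.1 % lam, w.2 % lam)) :
    (∀ U V : ℤ × ℤ, φ U = φ V ↔ ∃ α β : ℤ, V - U = (α * lam, β * lam)) ∧
    (∀ U V : ℤ × ℤ, U ≠ V → AtMostHops R h U V → φ U ≠ φ V) ∧
    Set.ncard (Set.range φ) = lam.natAbs ^ 2 := by
  have hhR : 0 < (h : ℝ) * R := by
    have : (1 : ℝ) ≤ (h : ℝ) := by exact_mod_cast hh
    nlinarith
  have hlam_pos : 0 < lam := by
    rw [hlam]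
    have : (0 : ℤ) ≤ ⌊(h : ℝ) * R⌋ := Int.le_floor.mpr (by exact_mod_cast hhR.le)
    omega
  have hlam_gt : (h : ℝ) * R < (lam : ℝ) := by
    rw [hlam]
    push_cast
    exact Int.lt_floor_add_one _
  -- Part 1
  have part1 : ∀ U V : ℤ × ℤ, φ U = φ V ↔ ∃ α β : ℤ, V - U = (α * lam, β * lam) := by
    intro U V
    rw [hφ, hφ, Prod.ext_iff]
    constructor
    · rintro ⟨h1, h2⟩
      have d1 : lam ∣ V.1 - U.1 := Int.ModEq.dvd h1
      have d2 : lam ∣ V.2 - U.2 := Int.ModEq.dvd h2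
      obtain ⟨a, ha⟩ := d1
      obtain ⟨b, hb⟩ := d2
      exact ⟨a, b, Prod.ext (by simpa [mul_comm] using ha) (by simpa [mul_comm] using hb)⟩
    · rintro ⟨a, b, hab⟩
      rw [Prod.ext_iff] at hab
      obtain ⟨h1, h2⟩ := hab
      simp only [Prod.fst_sub, Prod.snd_sub] at h1 h2
      constructor
      · have : V.1 = U.1 + a * lam := by omega
        simp [this, Int.add_mul_emod_self_right]
      · have : V.2 = U.2 + b * lam := by omega
        simp [this, Int.add_mul_emod_self_right]
  refine ⟨part1, ?_, ?_⟩
  · -- Part 2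
    intro U V hUV hhops heq
    obtain ⟨a, b, hab⟩ := (part1 U V).mp heq
    rw [Prod.ext_iff] at hab
    simp only [Prod.fst_sub, Prod.snd_sub] at hab
    obtain ⟨h1, h2⟩ := hab
    have hne : a ≠ 0 ∨ b ≠ 0 := by
      by_contra hc
      push_neg at hc
      obtain ⟨ha, hb⟩ := hc
      simp [ha, hb] at h1 h2
      exact hUV (Prod.ext (by omega) (by omega))
    have key : ∀ c x y : ℤ, c ≠ 0 → y - x = c * lam → (lam : ℝ) ≤ |((x - y : ℤ) : ℝ)| := by
      intro c x y hc hxy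
      have h1c : 1 ≤ |c| := Int.one_le_abs hc
      have : lam ≤ |x - y| := by
        have : |x - y| = |c| * lam := by
          rw [abs_sub_comm, hxy, abs_mul, abs_of_pos hlam_pos]
        rw [this]
        nlinarith
      rw [← Int.cast_abs]
      exact_mod_cast this
    have hge : (lam : ℝ) ≤ gridDist U V := by
      rcases hne with ha | hb
      · exact le_trans (key a U.1 V.1 ha h1) (abs_fst_le_gridDist U V)
      · exact le_trans (key b U.2 V.2 hb h2) (abs_snd_le_gridDist U V)
    obtain ⟨k, hk, W, hW0, hWk, hWi⟩ := hhops
    have hle : gridDist U V ≤ (k : ℝ) * R := by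
      rw [← hW0, ← hWk]
      exact path_bound R W k (fun i hi => (hWi i hi).2)
    have : (k : ℝ) * R ≤ (h : ℝ) * R := by
      apply mul_le_mul_of_nonneg_right _ hR.le
      exact_mod_cast hk
    linarith
  · -- Part 3
    have hrange : Set.range φ =
        ↑((Finset.Ico (0 : ℤ) lam) ×ˢ (Finset.Ico (0 : ℤ) lam)) := by
      ext p
      simp only [Set.mem_range, Finset.coe_product, Set.mem_prod, Finset.mem_coe,
        Finset.mem_Ico]
      constructor
      · rintro ⟨w, hw⟩
        rw [hφ] at hw
        rw [← hw]
        exact ⟨⟨Int.emod_nonneg _ hlam_pos.ne', Int.emod_lt_of_pos _ hlam_pos⟩,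
          ⟨Int.emod_nonneg _ hlam_pos.ne', Int.emod_lt_of_pos _ hlam_pos⟩⟩
      · rintro ⟨⟨h1, h2⟩, ⟨h3, h4⟩⟩
        refine ⟨p, ?_⟩
        rw [hφ]
        exact Prod.ext (Int.emod_eq_of_lt h1 h2) (Int.emod_eq_of_lt h3 h4)
    rw [hrange, Set.ncard_coe_finset, Finset.card_product, Int.card_Ico]
    have : (lam - 0).toNat = lam.natAbs := by omega
    rw [this]
    ring
end

section
/- Let R > √2 and h ≥ 1 an integer. There exist linearly independent vectors u₁, u₂ ∈ ℤ² such that every nonzero vector w = α·u₁ + β·u₂ (α, β ∈ ℤ, not both zero) has Euclidean norm |w| > h·R, and |det(u₁,u₂)| ≤ (√3/2)·h²·R² + 2hR + (hR+2)·√2. -/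
/-- Determinant of two integer vectors. -/
def idet (u v : ℤ × ℤ) : ℤ := u.1 * v.2 - u.2 * v.1

set_option maxHeartbeats 1000000 in
theorem near_hexagonal_upper_bound (R : ℝ) (hR : R > Real.sqrt 2)
    (h : ℕ) (hh : 1 ≤ h) :
    ∃ u₁ u₂ : ℤ × ℤ, idet u₁ u₂ ≠ 0 ∧
      (∀ α β : ℤ, ¬(α = 0 ∧ β = 0) → inorm (α • u₁ + β • u₂) > h * R) ∧
      |(idet u₁ u₂ : ℝ)| ≤
        (Real.sqrt 3 / 2) * h^2 * R^2 + 2 * h * R + (h * R + 2) * Real.sqrt 2 := by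
  have hs2 : (1:ℝ) < Real.sqrt 2 := by
    nlinarith [Real.sq_sqrt (by norm_num : (2:ℝ) ≥ 0), Real.sqrt_nonneg 2]
  have hs3a : Real.sqrt 3 ≥ 1 := by
    nlinarith [Real.sq_sqrt (by norm_num : (3:ℝ) ≥ 0), Real.sqrt_nonneg 3]
  have hs3sq : Real.sqrt 3 ^ 2 = 3 := Real.sq_sqrt (by norm_num)
  have hs2sq : Real.sqrt 2 ^ 2 = 2 := Real.sq_sqrt (by norm_num)
  have hh1 : (1:ℝ) ≤ (h:ℝ) := by exact_mod_cast hh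
  have hR1 : R > 1 := lt_trans hs2 hR
  obtain ⟨t, htdef⟩ : ∃ t : ℝ, t = (h : ℝ) * R := ⟨_, rfl⟩
  have ht1 : t > 1 := by rw [htdef]; nlinarith
  have ht0 : t > 0 := by linarith
  obtain ⟨A, hAdef⟩ : ∃ A : ℤ, A = ⌊t⌋ + 1 := ⟨_, rfl⟩
  obtain ⟨B, hBdef⟩ : ∃ B : ℤ, B = A / 2 := ⟨_, rfl⟩
  obtain ⟨C, hCdef⟩ : ∃ C : ℤ, C = ⌈Real.sqrt 3 / 2 * t + 1⌉ := ⟨_, rfl⟩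
  have hAgt : (A : ℝ) > t := by
    rw [hAdef]; push_cast; exact Int.lt_floor_add_one t
  have hAle : (A : ℝ) ≤ t + 1 := by
    rw [hAdef]; push_cast
    have := Int.floor_le t; linarith
  have hApos : (0:ℤ) < A := by
    have : (0:ℝ) < (A:ℝ) := lt_trans ht0 hAgt
    exact_mod_cast this
  have hB2 : 2 * B ≥ A - 1 := by omega
  have hB2' : 2 * B ≤ A := by omega
  have hB0' : (0:ℤ) ≤ B := by omega
  have hBr : (B : ℝ) ≥ ((A:ℝ) - 1) / 2 := by
    have : ((2 * B : ℤ) : ℝ) ≥ ((A - 1 : ℤ) : ℝ) := by exact_mod_cast hB2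
    push_cast at this; linarith
  have hBt : (B : ℝ) ≥ (t - 1) / 2 := by linarith
  have hB0 : (B : ℝ) ≥ 0 := by exact_mod_cast hB0'
  have hCge : (C : ℝ) ≥ Real.sqrt 3 / 2 * t + 1 := by
    rw [hCdef]; exact Int.le_ceil _
  have hCle : (C : ℝ) ≤ Real.sqrt 3 / 2 * t + 2 := by
    rw [hCdef]
    have := Int.ceil_lt_add_one (Real.sqrt 3 / 2 * t + 1); linarith
  have hC0 : (C : ℝ) > 0 := by nlinarith
  have hCpos : (0:ℤ) < C := by exact_mod_cast hC0
  refine ⟨(A, 0), (B, C), ?_, ?_, ?_⟩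
  · simp only [idet]
    have : A * C > 0 := mul_pos hApos hCpos
    intro hc
    rw [show A * C - 0 * B = A * C by ring] at hc
    omega
  · intro α β hαβ
    have hcomp : (α • ((A:ℤ), (0:ℤ)) + β • (B, C)) = (α * A + β * B, β * C) := by
      simp [Prod.ext_iff, smul_eq_mul]
    rw [hcomp]
    simp only [inorm]
    have key : t ^ 2 < ((α * A + β * B : ℤ) : ℝ) ^ 2 + ((β * C : ℤ) : ℝ) ^ 2 := by
      rcases eq_or_ne β 0 with hb | hb
      · -- β = 0, α ≠ 0
        have ha : α ≠ 0 := by tauto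
        subst hb
        push_cast
        have h1 : α^2 ≥ 1 := by
          rcases lt_trichotomy α 0 with h' | h' | h'
          · nlinarith
          · exact absurd h' ha
          · nlinarith
        have hi : ((α * A)^2 : ℤ) ≥ A ^ 2 := by nlinarith [sq_nonneg A]
        have hint : ((α:ℝ) * A)^2 ≥ (A:ℝ)^2 := by exact_mod_cast hi
        nlinarith [hAgt, ht0, hint]
      · rcases (by omega : β ≥ 2 ∨ β ≤ -2 ∨ β = 1 ∨ β = -1) with h2 | h2 | h2 | h2
        · -- β ≥ 2
          have hb4 : β^2 ≥ 4 := by nlinarith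
          have hi : ((β * C)^2 : ℤ) ≥ 4 * C ^ 2 := by nlinarith [hb4, sq_nonneg C]
          have hint : ((β:ℝ) * C)^2 ≥ 4 * (C:ℝ)^2 := by exact_mod_cast hi
          push_cast
          nlinarith [sq_nonneg ((α:ℝ) * A + β * B), hCge, hs3sq, hs3a, ht1, hC0, hint]
        · -- β ≤ -2
          have hb4 : β^2 ≥ 4 := by nlinarith
          have hi : ((β * C)^2 : ℤ) ≥ 4 * C ^ 2 := by nlinarith [hb4, sq_nonneg C]
          have hint : ((β:ℝ) * C)^2 ≥ 4 * (C:ℝ)^2 := by exact_mod_cast hi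
          push_cast
          nlinarith [sq_nonneg ((α:ℝ) * A + β * B), hCge, hs3sq, hs3a, ht1, hC0, hint]
        · -- β = 1
          subst h2
          have hx : (α * A + 1 * B)^2 ≥ B^2 := by
            rcases lt_trichotomy α 0 with hα | hα | hα
            · have h6 : α * A ≤ -A := by
                have := mul_le_mul_of_nonneg_right (by omega : α ≤ -1) hApos.le
                linarith
              have h5 : α * A + 1 * B ≤ -B := by linarith
              nlinarith [hB0']
            · subst hα; nlinarith
            · have h6 : α * A ≥ A := by
                have := mul_le_mul_of_nonneg_right (by omega : 1 ≤ α) hApos.le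
                linarith
              have h5 : α * A + 1 * B ≥ B := by linarith
              nlinarith [hB0']
          have hint : ((α:ℝ) * A + 1 * B)^2 ≥ (B:ℝ)^2 := by exact_mod_cast hx
          push_cast
          nlinarith [hBt, hCge, hs3sq, hs3a, ht1, hC0, hB0, hint]
        · -- β = -1
          subst h2
          have hx : (α * A + (-1) * B)^2 ≥ B^2 := by
            rcases lt_trichotomy α 0 with hα | hα | hα
            · have h6 : α * A ≤ -A := by
                have := mul_le_mul_of_nonneg_right (by omega : α ≤ -1) hApos.le
                linarith
              have h5 : α * A + (-1) * B ≤ -B := by linarith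
              nlinarith [hB0']
            · subst hα; nlinarith
            · have h6 : α * A ≥ A := by
                have := mul_le_mul_of_nonneg_right (by omega : 1 ≤ α) hApos.le
                linarith
              have h5 : α * A + (-1) * B ≥ B := by linarith
              nlinarith [hB0']
          have hint : ((α:ℝ) * A + (-1) * B)^2 ≥ (B:ℝ)^2 := by exact_mod_cast hx
          push_cast
          nlinarith [hBt, hCge, hs3sq, hs3a, ht1, hC0, hB0, hint]
    have hlt := Real.sqrt_lt_sqrt (by positivity) key
    rw [Real.sqrt_sq ht0.le] at hlt
    rw [← htdef]
    exact hlt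
  · simp only [idet]
    rw [show A * C - 0 * B = A * C by ring]
    have hAC : (0:ℤ) < A * C := mul_pos hApos hCpos
    have habs : |((A * C : ℤ) : ℝ)| = ((A * C : ℤ) : ℝ) := by
      rw [abs_of_pos]; exact_mod_cast hAC
    rw [habs]
    push_cast
    have hACle : (A:ℝ) * C ≤ (t + 1) * (Real.sqrt 3 / 2 * t + 2) := by
      apply mul_le_mul hAle hCle (le_of_lt hC0) (by linarith)
    have ht2 : Real.sqrt 3 / 2 * (h:ℝ)^2 * R^2 = Real.sqrt 3 / 2 * t^2 := by
      rw [htdef]; ring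
    have hhr : (h:ℝ) * R = t := htdef.symm
    rw [ht2, hhr]
    nlinarith [hs2sq, hs3sq, hs2, hs3a, ht1, Real.sqrt_nonneg 2, Real.sqrt_nonneg 3]
end
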